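/- Let m > 1 be an integer and M a finitely generated free module over ℤ/m²ℤ. Every endomorphism of the abelian group M maps the submodule mM into itself, and the restriction map red_m: End(M) → End(mM) is a surjective ring homomorphism with kernel m·End(M); consequently every v in the kernel satisfies v² = 0 = mv. Moreover, every automorphism u of M whose restriction to mM is the identity satisfies u^m = Id; in particular, the kernel of the induced surjection Aut(M) ↠ Aut(mM) is a group of exponent dividing m. -/

import Mathlib

/-- The subgroup `mM = {m·x : x ∈ M}` of an abelian group `M`. -/
def smulSubgroup (m : ℕ) (M : Type*) [AddCommGroup M] : AddSubgroup M :=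
  (m • AddMonoidHom.id M).range

section Aux

variable {m : ℕ} {M : Type*} [AddCommGroup M]

lemma mem_smulSubgroup_iff {y : M} : y ∈ smulSubgroup m M ↔ ∃ x, m • x = y := by
  simp [smulSubgroup, AddMonoidHom.mem_range]

variable [Module (ZMod (m ^ 2)) M]

lemma sq_smul_eq_zero (x : M) : m ^ 2 • x = 0 := by
  rw [← Nat.cast_smul_eq_nsmul (ZMod (m ^ 2)), ZMod.natCast_self, zero_smul]

lemma smul_smulSubgroup_eq_zero {y : M} (hy : y ∈ smulSubgroup m M) : m • y = 0 := by
  obtain ⟨x, rfl⟩ := mem_smulSubgroup_iff.mp hy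
  rw [smul_smul, ← pow_two]
  exact sq_smul_eq_zero x

lemma zmod_exists_of_smul_eq_zero (hm : 0 < m) {a : ZMod (m ^ 2)} (h : m • a = 0) :
    ∃ c : ZMod (m ^ 2), m • c = a := by
  haveI : NeZero (m ^ 2) := ⟨by positivity⟩
  have ha : ((a.val : ℕ) : ZMod (m ^ 2)) = a := ZMod.natCast_rightInverse a
  have h' : ((m * a.val : ℕ) : ZMod (m ^ 2)) = 0 := by
    push_cast
    rw [ha, ← nsmul_eq_mul]
    exact h
  have hdvd : m ^ 2 ∣ m * a.val := (ZMod.natCast_eq_zero_iff _ _).mp h'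
  have hdvd2 : m * m ∣ m * a.val := by rw [← Nat.pow_two]; exact hdvd
  obtain ⟨t, ht⟩ := (mul_dvd_mul_iff_left (by omega : m ≠ 0)).mp hdvd2
  refine ⟨(t : ZMod (m ^ 2)), ?_⟩
  rw [nsmul_eq_mul, ← ha, ht]
  push_cast
  ring

lemma val_smul (hm : 0 < m) (a : ZMod (m ^ 2)) (z : M) : a.val • z = a • z := by
  haveI : NeZero (m ^ 2) := ⟨by positivity⟩
  rw [← Nat.cast_smul_eq_nsmul (ZMod (m ^ 2))]
  congr 1
  exact ZMod.natCast_rightInverse a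

lemma nsmul_zmod_smul_comm (a : ZMod (m ^ 2)) (z : M) : m • (a • z) = a • (m • z) := by
  rw [← Nat.cast_smul_eq_nsmul (ZMod (m ^ 2)) m (a • z),
    ← Nat.cast_smul_eq_nsmul (ZMod (m ^ 2)) m z, smul_comm]

variable {ι : Type*} [Fintype ι] [DecidableEq ι]

omit [Fintype ι] [DecidableEq ι] in
lemma mem_smulSubgroup_of_smul_eq_zero [Finite ι]
    (e : M ≃ₗ[ZMod (m ^ 2)] (ι → ZMod (m ^ 2)))
    (hm : 0 < m) {y : M} (h : m • y = 0) :
    y ∈ smulSubgroup m M := by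
  have hcoord : ∀ i, m • (e y i) = 0 := by
    intro i
    have h0 : e (m • y) = 0 := by rw [h, map_zero]
    have := congrFun (h0 : (e (m • y) : ι → ZMod (m ^ 2)) = 0) i
    simpa [map_nsmul] using this
  choose c hc using fun i => zmod_exists_of_smul_eq_zero hm (hcoord i)
  refine mem_smulSubgroup_iff.mpr ⟨e.symm c, ?_⟩
  have h1 : (m • c : ι → ZMod (m ^ 2)) = e y := by
    funext i; simpa using hc i
  rw [← map_nsmul, h1, e.symm_apply_apply]

lemma expand (e : M ≃ₗ[ZMod (m ^ 2)] (ι → ZMod (m ^ 2))) (hm : 0 < m) (x : M) :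
    x = ∑ i, (e x i).val • e.symm (Pi.single i 1) := by
  calc x = e.symm (e x) := (e.symm_apply_apply x).symm
    _ = e.symm (∑ i, Pi.single i (e x i)) := by rw [Finset.univ_sum_single]
    _ = ∑ i, e.symm (Pi.single i (e x i)) := map_sum e.symm.toLinearMap _ _
    _ = ∑ i, (e x i) • e.symm (Pi.single i (1 : ZMod (m ^ 2))) := by
        refine Finset.sum_congr rfl fun i _ => ?_
        rw [← map_smul]
        congr 1
        funext j
        simp [Pi.single_apply, mul_ite]
    _ = ∑ i, (e x i).val • e.symm (Pi.single i 1) :=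
        Finset.sum_congr rfl fun i _ => (val_smul hm _ _).symm

/-- linear extension of prescribed values on the basis. -/
noncomputable def extMap (e : M ≃ₗ[ZMod (m ^ 2)] (ι → ZMod (m ^ 2))) (w : ι → M) : M →+ M :=
  AddMonoidHom.mk' (fun x => ∑ i, e x i • w i) (by
    intro x y
    simp only [map_add, Pi.add_apply, add_smul]
    rw [Finset.sum_add_distrib])

omit [DecidableEq ι] in
lemma extMap_apply (e : M ≃ₗ[ZMod (m ^ 2)] (ι → ZMod (m ^ 2))) (w : ι → M) (x : M) :
    extMap e w x = ∑ i, e x i • w i := rfl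

end Aux

/-- Let `m > 1` and let `M` be a finitely generated free module over `ℤ/m²ℤ`. Every
endomorphism of the abelian group `M` maps `mM` into itself; the restriction map
`red_m : End(M) → End(mM)` is a surjective ring homomorphism with kernel `m·End(M)`, and
every `v` in the kernel satisfies `v² = 0 = m·v`. Moreover every automorphism `u` of `M`
restricting to the identity on `mM` satisfies `u^m = 1`; in particular the kernel of the
induced surjection `Aut(M) ↠ Aut(mM)` has exponent dividing `m`. -/
theorem reduction_mod_m_of_free_module
    (m : ℕ) (hm : 1 < m) (M : Type*) [AddCommGroup M] [Module (ZMod (m ^ 2)) M]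
    [Module.Free (ZMod (m ^ 2)) M] [Module.Finite (ZMod (m ^ 2)) M] :
    (∀ f : M →+ M, ∀ x ∈ smulSubgroup m M, f x ∈ smulSubgroup m M) ∧
    (∃ red : AddMonoid.End M →+* AddMonoid.End (smulSubgroup m M),
      (∀ (f : AddMonoid.End M) (x : M) (hx : x ∈ smulSubgroup m M),
        ((red f) ⟨x, hx⟩ : M) = f x) ∧
      Function.Surjective red ∧
      (∀ f : AddMonoid.End M, red f = 0 ↔ ∃ h : AddMonoid.End M, f = m • h) ∧
      (∀ f : AddMonoid.End M, red f = 0 → f * f = 0 ∧ m • f = 0)) ∧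
    (∀ u : AddAut M, (∀ x ∈ smulSubgroup m M, u x = x) → m • u = 0) := by
  have hm0 : 0 < m := by omega
  classical
  -- basis setup
  let ι := Module.Free.ChooseBasisIndex (ZMod (m ^ 2)) M
  let b : Module.Basis ι (ZMod (m ^ 2)) M := Module.Free.chooseBasis (ZMod (m ^ 2)) M
  let e : M ≃ₗ[ZMod (m ^ 2)] (ι → ZMod (m ^ 2)) := b.equivFun
  let u : ι → M := fun i => e.symm (Pi.single i 1)
  have hu : ∀ x : M, x = ∑ i, (e x i).val • u i := fun x => expand e hm0 x
  have hmu : ∀ i, m • u i ∈ smulSubgroup m M := fun i => mem_smulSubgroup_iff.mpr ⟨u i, rfl⟩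
  -- part 1
  have part1 : ∀ f : M →+ M, ∀ x ∈ smulSubgroup m M, f x ∈ smulSubgroup m M := by
    intro f x hx
    obtain ⟨z, rfl⟩ := mem_smulSubgroup_iff.mp hx
    exact mem_smulSubgroup_iff.mpr ⟨f z, (map_nsmul f m z).symm⟩
  -- facts about endomorphisms vanishing on mM
  have himg' : ∀ f : M →+ M, (∀ y ∈ smulSubgroup m M, f y = 0) → ∀ x : M,
      f x ∈ smulSubgroup m M := by
    intro f hf x
    have h1 : m • f x = 0 := by
      rw [← map_nsmul]
      exact hf _ (mem_smulSubgroup_iff.mpr ⟨x, rfl⟩)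
    exact mem_smulSubgroup_of_smul_eq_zero e hm0 h1
  have hsq' : ∀ f : M →+ M, (∀ y ∈ smulSubgroup m M, f y = 0) →
      (∀ x : M, f (f x) = 0) ∧ (∀ x : M, m • f x = 0) := by
    intro f hf
    exact ⟨fun x => hf _ (himg' f hf x),
      fun x => smul_smulSubgroup_eq_zero (himg' f hf x)⟩
  refine ⟨part1, ?_, ?_⟩
  · -- the restriction ring hom
    set S := smulSubgroup m M with hS
    let red0 : AddMonoid.End M → AddMonoid.End S := fun f =>
      ((f : M →+ M).comp S.subtype).codRestrict S (fun y => part1 f y y.2)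
    have red0_apply : ∀ (f : AddMonoid.End M) (y : S), ((red0 f y : S) : M) = f (y : M) :=
      fun f y => rfl
    let red : AddMonoid.End M →+* AddMonoid.End S :=
      { toFun := red0
        map_one' := AddMonoidHom.ext fun y => Subtype.ext (red0_apply 1 y)
        map_mul' := fun f g => AddMonoidHom.ext fun y => Subtype.ext (red0_apply (f * g) y)
        map_zero' := AddMonoidHom.ext fun y => Subtype.ext (red0_apply 0 y)
        map_add' := fun f g => AddMonoidHom.ext fun y => Subtype.ext (red0_apply (f + g) y) }
    have red_apply : ∀ (f : AddMonoid.End M) (y : S), ((red f y : S) : M) = f (y : M) :=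
      fun f y => rfl
    have hvanish : ∀ f : AddMonoid.End M, red f = 0 → ∀ y ∈ S, f y = 0 := by
      intro f hf y hy
      have h2 : ((red f ⟨y, hy⟩ : S) : M) = f y := red_apply f ⟨y, hy⟩
      rw [hf] at h2
      simpa using h2.symm
    refine ⟨red, fun f x hx => red_apply f ⟨x, hx⟩, ?_, ?_, ?_⟩
    · -- surjectivity
      intro g
      choose w hw using fun i => mem_smulSubgroup_iff.mp (g ⟨m • u i, hmu i⟩).2
      refine ⟨(extMap e w : M →+ M), ?_⟩
      refine AddMonoidHom.ext fun y => Subtype.ext ?_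
      obtain ⟨x, hx⟩ := mem_smulSubgroup_iff.mp y.2
      have hy : y = ⟨m • x, mem_smulSubgroup_iff.mpr ⟨x, rfl⟩⟩ := Subtype.ext hx.symm
      refine (red_apply (extMap e w) y).trans ?_
      rw [hy]
      show extMap e w (m • x) = ((g ⟨m • x, _⟩ : S) : M)
      have hsum : (⟨m • x, mem_smulSubgroup_iff.mpr ⟨x, rfl⟩⟩ : S)
          = ∑ i, (e x i).val • (⟨m • u i, hmu i⟩ : S) := by
        refine Subtype.ext ?_
        rw [AddSubmonoidClass.coe_finset_sum]
        have hterm : ∀ i, (((e x i).val • (⟨m • u i, hmu i⟩ : S) : S) : M)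
            = m • ((e x i).val • u i) := by
          intro i
          show (e x i).val • (m • u i) = m • ((e x i).val • u i)
          rw [smul_comm]
        rw [Finset.sum_congr rfl fun i _ => hterm i, ← Finset.smul_sum]
        exact congrArg (m • ·) (hu x)
      calc extMap e w (m • x)
          = m • ∑ i, e x i • w i := by rw [map_nsmul, extMap_apply]
        _ = ∑ i, e x i • (m • w i) := by
            rw [Finset.smul_sum]
            exact Finset.sum_congr rfl fun i _ => nsmul_zmod_smul_comm _ _
        _ = ∑ i, (e x i).val • ((g ⟨m • u i, hmu i⟩ : S) : M) := by
            refine Finset.sum_congr rfl fun i _ => ?_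
            rw [hw i, val_smul hm0]
        _ = ((∑ i, (e x i).val • g ⟨m • u i, hmu i⟩ : S) : M) := by
            rw [AddSubmonoidClass.coe_finset_sum]
            exact Finset.sum_congr rfl fun i _ => rfl
        _ = ((g ⟨m • x, _⟩ : S) : M) := by
            have hstep : (∑ i, (e x i).val • g ⟨m • u i, hmu i⟩ : S)
                = g (∑ i, (e x i).val • (⟨m • u i, hmu i⟩ : S)) := by
              rw [map_sum]
              exact Finset.sum_congr rfl fun i _ => (map_nsmul g _ _).symm
            rw [hstep, ← hsum]
    · -- kernel characterization
      intro f
      constructor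
      · intro hf
        choose w hw using fun i => mem_smulSubgroup_iff.mp (himg' f (hvanish f hf) (u i))
        refine ⟨(extMap e w : M →+ M), AddMonoidHom.ext fun x => ?_⟩
        show f x = m • extMap e w x
        calc f x = f (∑ i, (e x i).val • u i) := by conv_lhs => rw [hu x]
          _ = ∑ i, (e x i).val • f (u i) := by
              rw [map_sum]
              exact Finset.sum_congr rfl fun i _ => map_nsmul f _ _
          _ = ∑ i, (e x i).val • (m • w i) := by
              exact Finset.sum_congr rfl fun i _ => by rw [hw i]; rfl
          _ = ∑ i, m • ((e x i).val • w i) := by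
              exact Finset.sum_congr rfl fun i _ => (smul_comm _ _ _)
          _ = m • ∑ i, (e x i).val • w i := (Finset.smul_sum).symm
          _ = m • ∑ i, e x i • w i := by
              refine congrArg (m • ·) (Finset.sum_congr rfl fun i _ => val_smul hm0 _ _)
          _ = m • extMap e w x := by rw [extMap_apply]
      · rintro ⟨h, rfl⟩
        refine AddMonoidHom.ext fun y => Subtype.ext ?_
        obtain ⟨x, hx⟩ := mem_smulSubgroup_iff.mp y.2
        show (m • h : AddMonoid.End M) (y : M) = 0
        rw [← hx]
        show m • h (m • x) = 0
        rw [map_nsmul, smul_smul, ← pow_two]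
        exact sq_smul_eq_zero _
    · -- nilpotence of the kernel
      intro f hf
      constructor
      · exact AddMonoidHom.ext fun x => (hsq' f (hvanish f hf)).1 x
      · exact AddMonoidHom.ext fun x => (hsq' f (hvanish f hf)).2 x
  · -- automorphisms restricting to identity on mM
    intro uu huu
    let fE : AddMonoid.End M := AddMonoidHom.mk' (fun x => uu x) (map_add uu)
    let v : AddMonoid.End M := fE - 1
    have hv : ∀ y ∈ smulSubgroup m M, v y = 0 := by
      intro y hy
      show uu y - y = 0
      rw [huu y hy, sub_self]
    have hvv : v * v = 0 := AddMonoidHom.ext fun x => (hsq' v hv).1 x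
    have hmv : m • v = 0 := AddMonoidHom.ext fun x => (hsq' v hv).2 x
    have hpow : fE ^ m = 1 := by
      have hfE : fE = v + 1 := by
        show fE = fE - 1 + 1
        abel
      rw [hfE, Commute.add_pow (Commute.one_right v)]
      have hzero : ∀ k ∈ Finset.range (m + 1), k ∉ Finset.range 2 →
          v ^ k * 1 ^ (m - k) * ((Nat.choose m k : ℕ) : AddMonoid.End M) = 0 := by
        intro k _ hk2
        have h2k : 2 ≤ k := by simp at hk2; omega
        obtain ⟨j, rfl⟩ : ∃ j, k = j + 2 := ⟨k - 2, by omega⟩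
        rw [pow_add, pow_two, hvv, mul_zero, zero_mul, zero_mul]
      rw [← Finset.sum_subset
        (by intro k hk; simp only [Finset.mem_range] at hk ⊢; omega) hzero]
      rw [Finset.sum_range_succ, Finset.sum_range_one]
      have h1 : v ^ 1 * 1 ^ (m - 1) * ((Nat.choose m 1 : ℕ) : AddMonoid.End M) = 0 := by
        rw [pow_one, one_pow, mul_one, Nat.choose_one_right,
          ← (Nat.cast_commute m v).eq, ← nsmul_eq_mul, hmv]
      rw [h1, pow_zero, one_mul, one_pow, Nat.choose_zero_right, Nat.cast_one, mul_one,
        add_zero]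
    have happ : ∀ k : ℕ, ∀ x : M, (k • uu) x = (fE ^ k) x := by
      intro k
      induction k with
      | zero => intro x; rw [zero_nsmul, pow_zero]; rfl
      | succ k ih =>
        intro x
        rw [succ_nsmul, pow_succ]
        exact ih (uu x)
    refine AddEquiv.ext fun x => ?_
    rw [happ m x, hpow]
    rfl
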